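/- Let n be an even positive integer, ℓ ≥ 1, and let ψ : (0,∞) → ℝ satisfy 0 ≤ ψ(t) and ψ(t) = o(t) as t → ∞. With k̃_ℓ(r,t) = t k_{ℓ+1}(√(t²−r²)/2) − 2 k_ℓ(√(t²−r²)/2), one has k̃_ℓ(ψ(t),t) = (2^ℓ/t^ℓ) exp(√(t²−ψ(t)²)/2) (−2ℓ/t + (1/2)(ψ(t)/t)² + O((ψ(t)/t)⁴) + O(ψ(t)²/t³) + O(1/t²)) as t → ∞. -/

import Mathlib

set_option maxHeartbeats 1000000

open Filter

noncomputable section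

/-- `k_ℓ(s) = Σ_{j=0}^∞ s^{2j+1} / ((2(j+ℓ))!! (2j+1)!!)`. -/
def kEven (ℓ : ℕ) (s : ℝ) : ℝ :=
  ∑' j : ℕ, s ^ (2 * j + 1) /
    (((2 * (j + ℓ)).doubleFactorial : ℝ) * ((2 * j + 1).doubleFactorial : ℝ))

/-- `k̃_ℓ(r,t) = t k_{ℓ+1}(√(t²−r²)/2) − 2 k_ℓ(√(t²−r²)/2)`. -/
def kTilde (ℓ : ℕ) (r t : ℝ) : ℝ :=
  t * kEven (ℓ + 1) (Real.sqrt (t ^ 2 - r ^ 2) / 2)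
    - 2 * kEven ℓ (Real.sqrt (t ^ 2 - r ^ 2) / 2)

/-- comparison summability against the odd exponential series -/
lemma summable_of_le_oddfact (c : ℕ → ℝ) (x : ℝ)
    (h : ∀ j, |c j| ≤ x ^ (2 * j + 1) / ((2 * j + 1).factorial : ℝ)) : Summable c := by
  have h1 : Summable (fun n : ℕ => x ^ n / (n.factorial : ℝ)) :=
    Real.summable_pow_div_factorial x
  have h2 : Summable (fun j : ℕ => x ^ (2 * j + 1) / ((2 * j + 1).factorial : ℝ)) := by
    have := h1.comp_injective (i := fun j : ℕ => 2 * j + 1) (fun a b hab => by simpa using hab)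
    simpa [Function.comp_def] using this
  refine summable_abs_iff.mp ?_
  exact Summable.of_nonneg_of_le (fun j => abs_nonneg _) h h2

lemma dfac_mono (j ℓ : ℕ) : (2 * j).doubleFactorial ≤ (2 * (j + ℓ)).doubleFactorial := by
  induction ℓ with
  | zero => simp
  | succ n ih =>
    have : 2 * (j + (n + 1)) = 2 * (j + n) + 2 := by ring
    rw [this, Nat.doubleFactorial_add_two]
    calc (2 * j).doubleFactorial ≤ (2 * (j + n)).doubleFactorial := ih
    _ ≤ (2 * (j + n) + 2) * (2 * (j + n)).doubleFactorial := Nat.le_mul_of_pos_left _ (by omega)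

lemma fact_le_dfac (j ℓ : ℕ) :
    ((2 * j + 1).factorial : ℕ) ≤ (2 * (j + ℓ)).doubleFactorial * (2 * j + 1).doubleFactorial := by
  have h1 : (2 * j + 1).factorial = (2 * j + 1).doubleFactorial * (2 * j).doubleFactorial :=
    Nat.factorial_eq_mul_doubleFactorial (2 * j)
  rw [h1, mul_comm]
  exact Nat.mul_le_mul_right _ (dfac_mono j ℓ)

lemma kEven_term_le (ℓ j : ℕ) (s : ℝ) :
    |s ^ (2 * j + 1) / (((2 * (j + ℓ)).doubleFactorial : ℝ) * ((2 * j + 1).doubleFactorial : ℝ))|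
      ≤ |s| ^ (2 * j + 1) / ((2 * j + 1).factorial : ℝ) := by
  rw [abs_div, abs_pow]
  have hd : ((2 * j + 1).factorial : ℝ)
      ≤ ((2 * (j + ℓ)).doubleFactorial : ℝ) * ((2 * j + 1).doubleFactorial : ℝ) := by
    exact_mod_cast fact_le_dfac j ℓ
  have hpos : (0:ℝ) < ((2 * (j + ℓ)).doubleFactorial : ℝ) * ((2 * j + 1).doubleFactorial : ℝ) := by
    positivity
  rw [abs_of_pos hpos]
  exact div_le_div_of_nonneg_left (by positivity) (by positivity) hd

lemma kEven_summable (ℓ : ℕ) (s : ℝ) :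
    Summable (fun j : ℕ => s ^ (2 * j + 1) /
      (((2 * (j + ℓ)).doubleFactorial : ℝ) * ((2 * j + 1).doubleFactorial : ℝ))) :=
  summable_of_le_oddfact _ |s| (fun j => kEven_term_le ℓ j s)

lemma exp_tsum (x : ℝ) : Real.exp x = ∑' n : ℕ, x ^ n / (n.factorial : ℝ) := by
  rw [Real.exp_eq_exp_ℝ, NormedSpace.exp_eq_tsum_div]

lemma even_odd_split (s : ℝ) :
    (∑' k : ℕ, s ^ (2 * k) / ((2 * k).factorial : ℝ)) = (Real.exp s + Real.exp (-s)) / 2 ∧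
    (∑' k : ℕ, s ^ (2 * k + 1) / ((2 * k + 1).factorial : ℝ)) = (Real.exp s - Real.exp (-s)) / 2 := by
  have key : ∀ x : ℝ, (∑' k : ℕ, x ^ (2 * k) / ((2 * k).factorial : ℝ))
      + (∑' k : ℕ, x ^ (2 * k + 1) / ((2 * k + 1).factorial : ℝ)) = Real.exp x := by
    intro x
    have hf : Summable (fun n : ℕ => x ^ n / (n.factorial : ℝ)) :=
      Real.summable_pow_div_factorial x
    have hfe : Summable (fun k : ℕ => x ^ (2 * k) / ((2 * k).factorial : ℝ)) := by
      have := hf.comp_injective (i := fun j : ℕ => 2 * j) (fun a b hab => by simpa using hab)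
      simpa [Function.comp_def] using this
    have hfo : Summable (fun k : ℕ => x ^ (2 * k + 1) / ((2 * k + 1).factorial : ℝ)) := by
      have := hf.comp_injective (i := fun j : ℕ => 2 * j + 1) (fun a b hab => by simpa using hab)
      simpa [Function.comp_def] using this
    rw [exp_tsum]
    exact tsum_even_add_odd (f := fun n : ℕ => x ^ n / (n.factorial : ℝ)) hfe hfo
  have h1 := key s
  have h2 := key (-s)
  have hge : (∑' k : ℕ, (-s) ^ (2 * k) / ((2 * k).factorial : ℝ))
      = ∑' k : ℕ, s ^ (2 * k) / ((2 * k).factorial : ℝ) := by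
    congr 1; funext k
    rw [show (-s) ^ (2*k) = s ^ (2*k) by rw [pow_mul, pow_mul, neg_pow_two]]
  have hgo : (∑' k : ℕ, (-s) ^ (2 * k + 1) / ((2 * k + 1).factorial : ℝ))
      = -∑' k : ℕ, s ^ (2 * k + 1) / ((2 * k + 1).factorial : ℝ) := by
    rw [← tsum_neg]
    congr 1; funext k
    rw [pow_succ, pow_succ, pow_mul, pow_mul, neg_pow_two]
    ring
  rw [hge, hgo] at h2
  constructor <;> linarith

lemma kEven_zero (s : ℝ) : kEven 0 s = (Real.exp s - Real.exp (-s)) / 2 := by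
  rw [← (even_odd_split s).2]
  unfold kEven
  congr 1; funext j
  congr 1
  rw [show ((2 * j + 1).factorial : ℝ)
      = ((2 * (j + 0)).doubleFactorial : ℝ) * ((2 * j + 1).doubleFactorial : ℝ) by
    rw [add_zero]
    rw [show (2 * j + 1).factorial = (2 * j + 1).doubleFactorial * (2 * j).doubleFactorial from
      Nat.factorial_eq_mul_doubleFactorial (2 * j)]
    push_cast; ring]

lemma kEven_one (s : ℝ) (hs : s ≠ 0) :
    kEven 1 s = (Real.exp s + Real.exp (-s) - 2) / (2 * s) := by
  have hden : ∀ j : ℕ, ((2 * (j + 1)).doubleFactorial : ℝ) * ((2 * j + 1).doubleFactorial : ℝ)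
      = ((2 * j + 2).factorial : ℝ) := by
    intro j
    rw [show (2 * j + 2).factorial = (2 * j + 2).doubleFactorial * (2 * j + 1).doubleFactorial from
      Nat.factorial_eq_mul_doubleFactorial (2 * j + 1)]
    rw [show 2 * (j + 1) = 2 * j + 2 by ring]
    push_cast; ring
  have hmul : s * kEven 1 s = ∑' j : ℕ, s ^ (2 * j + 2) / ((2 * j + 2).factorial : ℝ) := by
    unfold kEven
    rw [← tsum_mul_left]
    congr 1; funext j
    rw [hden j]
    rw [show s * (s ^ (2 * j + 1) / ((2 * j + 2).factorial : ℝ))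
        = s ^ (2 * j + 2) / ((2 * j + 2).factorial : ℝ) by rw [pow_succ]; ring]
  have heven : (∑' k : ℕ, s ^ (2 * k) / ((2 * k).factorial : ℝ))
      = 1 + ∑' j : ℕ, s ^ (2 * j + 2) / ((2 * j + 2).factorial : ℝ) := by
    have hsum : Summable (fun k : ℕ => s ^ (2 * k) / ((2 * k).factorial : ℝ)) := by
      have hf : Summable (fun n : ℕ => s ^ n / (n.factorial : ℝ)) :=
        Real.summable_pow_div_factorial s
      have := hf.comp_injective (i := fun j : ℕ => 2 * j) (fun a b hab => by simpa using hab)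
      simpa [Function.comp_def] using this
    rw [Summable.tsum_eq_zero_add hsum]
    have he : ∀ b : ℕ, s ^ (2 * (b + 1)) / (((2 * (b + 1)).factorial : ℕ) : ℝ)
        = s ^ (2 * b + 2) / ((2 * b + 2).factorial : ℝ) := by
      intro b; rw [show 2 * (b + 1) = 2 * b + 2 by ring]
    simp only [he]
    norm_num
  have h2 := (even_odd_split s).1
  rw [heven] at h2
  have : s * kEven 1 s = (Real.exp s + Real.exp (-s)) / 2 - 1 := by rw [hmul]; linarith
  field_simp
  linarith [this]

lemma kEven_rec (m : ℕ) (s : ℝ) :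
    kEven m s = (2 * (m : ℝ) + 1) * kEven (m + 1) s
      + s / ((2 * (m + 1)).doubleFactorial : ℝ) + s ^ 2 * kEven (m + 2) s := by
  set u : ℕ → ℝ := fun j => s ^ (2 * j + 1) /
    (((2 * (j + (m + 1))).doubleFactorial : ℝ) * ((2 * j + 1).doubleFactorial : ℝ)) with hu
  set g : ℕ → ℝ := fun j => (2 * (j : ℝ) + 1) * u j with hg
  -- double factorial growth identity, real version
  have hdf : ∀ j : ℕ, ((2 * (j + (m + 1))).doubleFactorial : ℝ)
      = (2 * (j : ℝ) + 2 * (m : ℝ) + 2) * ((2 * (j + m)).doubleFactorial : ℝ) := by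
    intro j
    rw [show 2 * (j + (m + 1)) = 2 * (j + m) + 2 by ring, Nat.doubleFactorial_add_two]
    push_cast; ring
  -- summability of g
  have hgsum : Summable g := by
    apply summable_of_le_oddfact g |s|
    intro j
    have hnat : (2 * j + 1) * (2 * j + 1).factorial
        ≤ (2 * (j + (m + 1))).doubleFactorial * (2 * j + 1).doubleFactorial := by
      calc (2 * j + 1) * (2 * j + 1).factorial ≤ (2 * j + 2) * (2 * j + 1).factorial := by
            apply Nat.mul_le_mul_right; omega
      _ = (2 * j + 2).factorial := rfl
      _ = (2 * j + 2).doubleFactorial * (2 * j + 1).doubleFactorial :=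
            Nat.factorial_eq_mul_doubleFactorial (2 * j + 1)
      _ ≤ (2 * (j + (m + 1))).doubleFactorial * (2 * j + 1).doubleFactorial := by
            apply Nat.mul_le_mul_right
            calc (2 * j + 2).doubleFactorial = (2 * (j + 1)).doubleFactorial := by ring_nf
            _ ≤ (2 * ((j + 1) + m)).doubleFactorial := dfac_mono (j + 1) m
            _ = (2 * (j + (m + 1))).doubleFactorial := by ring_nf
    have hnr : ((2 * j + 1 : ℕ) : ℝ) * ((2 * j + 1).factorial : ℝ)
        ≤ ((2 * (j + (m + 1))).doubleFactorial : ℝ) * ((2 * j + 1).doubleFactorial : ℝ) := by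
      exact_mod_cast hnat
    have h1 : |g j| = (2 * (j:ℝ) + 1) * |s| ^ (2 * j + 1)
        / (((2 * (j + (m + 1))).doubleFactorial : ℝ) * ((2 * j + 1).doubleFactorial : ℝ)) := by
      rw [hg, hu]
      rw [abs_mul, abs_div, abs_pow, abs_of_pos (by positivity : (0:ℝ) <
        ((2 * (j + (m + 1))).doubleFactorial : ℝ) * ((2 * j + 1).doubleFactorial : ℝ)),
        abs_of_pos (by positivity : (0:ℝ) < 2 * (j:ℝ) + 1)]
      ring
    rw [h1]
    rw [div_le_div_iff₀ (by positivity) (by positivity)]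
    calc (2 * (j:ℝ) + 1) * |s| ^ (2 * j + 1) * ((2 * j + 1).factorial : ℝ)
        = |s| ^ (2 * j + 1) * (((2 * j + 1 : ℕ) : ℝ) * ((2 * j + 1).factorial : ℝ)) := by
          push_cast; ring
      _ ≤ |s| ^ (2 * j + 1) *
          (((2 * (j + (m + 1))).doubleFactorial : ℝ) * ((2 * j + 1).doubleFactorial : ℝ)) := by
          apply mul_le_mul_of_nonneg_left hnr (by positivity)
  have husum : Summable u := kEven_summable (m + 1) s
  -- term identity
  have hterm : ∀ j : ℕ, s ^ (2 * j + 1) /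
      (((2 * (j + m)).doubleFactorial : ℝ) * ((2 * j + 1).doubleFactorial : ℝ))
      = (2 * (m : ℝ) + 1) * u j + g j := by
    intro j
    rw [hg, hu]
    simp only
    rw [hdf j]
    have h2 : (0:ℝ) < ((2 * (j + m)).doubleFactorial : ℝ) := by positivity
    have h3 : (0:ℝ) < ((2 * j + 1).doubleFactorial : ℝ) := by positivity
    field_simp
    ring
  have hsplit : kEven m s = (2 * (m : ℝ) + 1) * kEven (m + 1) s + ∑' j, g j := by
    unfold kEven
    rw [show (∑' j : ℕ, s ^ (2 * j + 1) /
        (((2 * (j + m)).doubleFactorial : ℝ) * ((2 * j + 1).doubleFactorial : ℝ)))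
        = ∑' j : ℕ, ((2 * (m : ℝ) + 1) * u j + g j) by congr 1; funext j; exact hterm j]
    rw [Summable.tsum_add (husum.mul_left _) hgsum, tsum_mul_left]
  -- now handle ∑' g
  have hgshift : ∀ j : ℕ, g (j + 1) = s ^ 2 * (s ^ (2 * j + 1) /
      (((2 * (j + (m + 2))).doubleFactorial : ℝ) * ((2 * j + 1).doubleFactorial : ℝ))) := by
    intro j
    rw [hg, hu]
    simp only
    have e1 : 2 * (j + 1) + 1 = (2 * j + 1) + 2 := by ring
    have e2 : ((2 * ((j:ℝ) + 1)) + 1) = (2 * (j:ℝ) + 3) := by ring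
    have hodd : (((2 * (j + 1) + 1).doubleFactorial : ℕ) : ℝ)
        = (2 * (j:ℝ) + 3) * ((2 * j + 1).doubleFactorial : ℝ) := by
      rw [e1, Nat.doubleFactorial_add_two]
      push_cast; ring
    have hidx : 2 * ((j + 1) + (m + 1)) = 2 * (j + (m + 2)) := by ring
    rw [hidx, hodd]
    have h2 : (0:ℝ) < ((2 * (j + (m + 2))).doubleFactorial : ℝ) := by positivity
    have h3 : (0:ℝ) < ((2 * j + 1).doubleFactorial : ℝ) := by positivity
    have h4 : (0:ℝ) < 2 * (j:ℝ) + 3 := by positivity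
    rw [show s ^ (2 * (j + 1) + 1) = s ^ (2 * j + 1) * s ^ 2 by rw [← pow_add]; ring_nf]
    push_cast
    field_simp
    ring
  have hg0 : g 0 = s / ((2 * (m + 1)).doubleFactorial : ℝ) := by
    rw [hg, hu]
    norm_num [Nat.doubleFactorial]
  have hgsum2 : (∑' j, g j) = s / ((2 * (m + 1)).doubleFactorial : ℝ) + s ^ 2 * kEven (m + 2) s := by
    rw [Summable.tsum_eq_zero_add hgsum, hg0]
    congr 1
    rw [show (∑' j : ℕ, g (j + 1)) = ∑' j : ℕ, s ^ 2 * (s ^ (2 * j + 1) /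
        (((2 * (j + (m + 2))).doubleFactorial : ℝ) * ((2 * j + 1).doubleFactorial : ℝ)))
      by congr 1; funext j; exact hgshift j]
    rw [tsum_mul_left]
    rfl
  rw [hsplit, hgsum2]
  ring

/-- the statement of the two-term asymptotic bound -/
def KP (ℓ : ℕ) : Prop := ∃ C : ℝ, 0 < C ∧ ∀ s : ℝ, 1 ≤ s →
  |kEven ℓ s - Real.exp s / (2 * s ^ ℓ) * (1 - (ℓ : ℝ) * ((ℓ : ℝ) - 1) / (2 * s))|
    ≤ C * Real.exp s / s ^ (ℓ + 2)

lemma kp_zero : KP 0 := by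
  refine ⟨1, one_pos, fun s hs => ?_⟩
  have hs0 : (0:ℝ) < s := by linarith
  have hdiff : kEven 0 s - Real.exp s / (2 * s ^ (0:ℕ)) * (1 - ((0:ℕ) : ℝ) * (((0:ℕ) : ℝ) - 1) / (2 * s))
      = -(Real.exp (-s) / 2) := by
    rw [kEven_zero]; push_cast; rw [pow_zero]; ring
  rw [hdiff, abs_neg, abs_of_nonneg (by positivity)]
  have h1 : Real.exp (-s) ≤ 1 := by
    rw [show (1:ℝ) = Real.exp 0 by rw [Real.exp_zero]]
    exact Real.exp_le_exp.mpr (by linarith)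
  have h2 : s ^ 2 / 2 ≤ Real.exp s := by
    have := Real.pow_div_factorial_le_exp s (by linarith) 2
    norm_num at this
    linarith
  rw [show (0:ℕ) + 2 = 2 by rfl, div_le_div_iff₀ (by norm_num) (by positivity), one_mul]
  nlinarith [Real.exp_pos s, sq_nonneg s]

lemma kp_one : KP 1 := by
  refine ⟨3, by norm_num, fun s hs => ?_⟩
  have hs0 : (0:ℝ) < s := by linarith
  have hdiff : kEven 1 s - Real.exp s / (2 * s ^ (1:ℕ)) * (1 - ((1:ℕ) : ℝ) * (((1:ℕ) : ℝ) - 1) / (2 * s))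
      = (Real.exp (-s) - 2) / (2 * s) := by
    rw [kEven_one s hs0.ne']; push_cast; rw [pow_one]; field_simp; ring
  rw [hdiff]
  have h1 : Real.exp (-s) ≤ 1 := by
    rw [show (1:ℝ) = Real.exp 0 by rw [Real.exp_zero]]
    exact Real.exp_le_exp.mpr (by linarith)
  have h1' : 0 < Real.exp (-s) := Real.exp_pos _
  have habs : |(Real.exp (-s) - 2) / (2 * s)| ≤ 3 / (2 * s) := by
    rw [abs_div, abs_of_pos (by positivity : (0:ℝ) < 2 * s)]
    apply div_le_div_of_nonneg_right ?_ (by positivity)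
    rw [abs_le]; constructor <;> nlinarith
  refine habs.trans ?_
  have h2 : s ^ 2 / 2 ≤ Real.exp s := by
    have := Real.pow_div_factorial_le_exp s (by linarith) 2
    norm_num at this
    linarith
  rw [div_le_div_iff₀ (by positivity) (by positivity)]
  have hp : s ^ (1 + 2) = s ^ 2 * s := by ring
  rw [hp]
  nlinarith [Real.exp_pos s]

lemma kp_step (n : ℕ) (hn : KP n) (hn1 : KP (n + 1)) : KP (n + 2) := by
  obtain ⟨C1, hC1, h1⟩ := hn
  obtain ⟨C2, hC2, h2⟩ := hn1
  refine ⟨C1 + (2 * (n:ℝ) + 1) * C2 + (2 * (n:ℝ) + 1) * ((n:ℝ) + 1) * (n:ℝ) / 4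
      + ((n + 3).factorial : ℝ), by positivity, fun s hs => ?_⟩
  have hs0 : (0:ℝ) < s := by linarith
  have hE : (0:ℝ) < Real.exp s := Real.exp_pos s
  set E := Real.exp s with hEdef
  set dfac : ℝ := ((2 * (n + 1)).doubleFactorial : ℝ) with hdfac
  have hdfac1 : (1:ℝ) ≤ dfac := by
    rw [hdfac]; exact_mod_cast Nat.one_le_iff_ne_zero.mpr (Nat.doubleFactorial_pos _).ne'
  have hdfac0 : (0:ℝ) < dfac := by linarith
  set a := kEven n s
  set b := kEven (n + 1) s
  set c := kEven (n + 2) s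
  set Mn : ℝ := E / (2 * s ^ n) * (1 - (n:ℝ) * ((n:ℝ) - 1) / (2 * s)) with hMn
  set M1 : ℝ := E / (2 * s ^ (n+1)) * (1 - ((n:ℝ) + 1) * (n:ℝ) / (2 * s)) with hM1
  set M2 : ℝ := E / (2 * s ^ (n+2)) * (1 - ((n:ℝ) + 2) * ((n:ℝ) + 1) / (2 * s)) with hM2
  have hMn' : Real.exp s / (2 * s ^ n) * (1 - (n : ℝ) * ((n : ℝ) - 1) / (2 * s)) = Mn := by
    rw [hMn, hEdef]
  have hb1 : |a - Mn| ≤ C1 * E / s ^ (n + 2) := by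
    have h := h1 s hs
    rw [hMn'] at h
    rw [← hEdef] at h
    exact h
  have hM1' : Real.exp s / (2 * s ^ (n + 1)) * (1 - ((n + 1 : ℕ) : ℝ) * (((n + 1 : ℕ) : ℝ) - 1) / (2 * s)) = M1 := by
    rw [hM1, hEdef]; push_cast; ring
  have hb2 : |b - M1| ≤ C2 * E / s ^ (n + 3) := by
    have h := h2 s hs
    rw [hM1'] at h
    rw [← hEdef] at h
    rw [show n + 1 + 2 = n + 3 by omega] at h
    exact h
  have hrec := kEven_rec n s
  have hc : c = (a - (2 * (n:ℝ) + 1) * b - s / dfac) / s ^ 2 := by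
    rw [eq_div_iff (by positivity : (s:ℝ) ^ 2 ≠ 0)]
    linarith [hrec]
  have hiden : (Mn - (2 * (n:ℝ) + 1) * M1) / s ^ 2
      = M2 + E * (2 * (n:ℝ) + 1) * ((n:ℝ) + 1) * (n:ℝ) / (4 * s ^ (n + 4)) := by
    rw [hMn, hM1, hM2]
    have hsn : s ^ n ≠ 0 := by positivity
    field_simp
    ring
  have hceq : c - M2 = (a - Mn) / s ^ 2 + (-((2 * (n:ℝ) + 1) * (b - M1) / s ^ 2))
      + E * (2 * (n:ℝ) + 1) * ((n:ℝ) + 1) * (n:ℝ) / (4 * s ^ (n + 4))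
      + (-(1 / (dfac * s))) := by
    rw [hc]
    rw [show (a - (2 * (n:ℝ) + 1) * b - s / dfac) / s ^ 2
        = (a - Mn) / s ^ 2 - (2 * (n:ℝ) + 1) * (b - M1) / s ^ 2
          + (Mn - (2 * (n:ℝ) + 1) * M1) / s ^ 2 - (s / dfac) / s ^ 2 by ring]
    rw [hiden]
    rw [show (s / dfac) / s ^ 2 = 1 / (dfac * s) by field_simp]
    ring
  -- bound each piece
  have e1 : |(a - Mn) / s ^ 2| ≤ C1 * E / s ^ (n + 4) := by
    rw [abs_div, abs_of_pos (by positivity : (0:ℝ) < s ^ 2),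
      show C1 * E / s ^ (n + 4) = (C1 * E / s ^ (n + 2)) / s ^ 2 by
        rw [div_div, ← pow_add]]
    exact div_le_div_of_nonneg_right hb1 (by positivity)
  have e2 : |(-((2 * (n:ℝ) + 1) * (b - M1) / s ^ 2))| ≤ (2 * (n:ℝ) + 1) * C2 * E / s ^ (n + 4) := by
    rw [abs_neg, abs_div, abs_mul, abs_of_pos (by positivity : (0:ℝ) < s ^ 2),
      abs_of_pos (by positivity : (0:ℝ) < 2 * (n:ℝ) + 1)]
    have step1 : (2 * (n:ℝ) + 1) * |b - M1| / s ^ 2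
        ≤ (2 * (n:ℝ) + 1) * (C2 * E / s ^ (n + 3)) / s ^ 2 := by
      gcongr
    refine step1.trans ?_
    rw [show (2 * (n:ℝ) + 1) * (C2 * E / s ^ (n + 3)) / s ^ 2
        = (2 * (n:ℝ) + 1) * C2 * E / s ^ (n + 5) by
      rw [show n + 5 = (n + 3) + 2 by omega, pow_add]; field_simp; ring]
    apply div_le_div_of_nonneg_left (by positivity) (by positivity)
    exact pow_le_pow_right₀ hs (by omega)
  have e3 : |E * (2 * (n:ℝ) + 1) * ((n:ℝ) + 1) * (n:ℝ) / (4 * s ^ (n + 4))|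
      ≤ ((2 * (n:ℝ) + 1) * ((n:ℝ) + 1) * (n:ℝ) / 4) * E / s ^ (n + 4) := by
    rw [abs_of_nonneg (by positivity)]
    apply le_of_eq
    field_simp
  have e4 : |(-(1 / (dfac * s)))| ≤ ((n + 3).factorial : ℝ) * E / s ^ (n + 4) := by
    rw [abs_neg, abs_of_nonneg (by positivity)]
    have hp : s ^ (n + 3) ≤ ((n + 3).factorial : ℝ) * E := by
      have := Real.pow_div_factorial_le_exp s (by linarith) (n + 3)
      rw [div_le_iff₀ (by positivity : (0:ℝ) < ((n+3).factorial : ℝ))] at this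
      linarith [this]
    have t1 : 1 / (dfac * s) ≤ 1 / s := by
      apply div_le_div_of_nonneg_left (by norm_num) (by positivity)
      nlinarith
    refine t1.trans ?_
    rw [div_le_div_iff₀ (by positivity) (by positivity), one_mul, show s ^ (n + 4) = s ^ (n + 3) * s by ring]
    nlinarith
  have key : |c - M2| ≤ (C1 + (2 * (n:ℝ) + 1) * C2 + (2 * (n:ℝ) + 1) * ((n:ℝ) + 1) * (n:ℝ) / 4
      + ((n + 3).factorial : ℝ)) * E / s ^ ((n + 2) + 2) := calc
    |c - M2| ≤ |(a - Mn) / s ^ 2| + |(-((2 * (n:ℝ) + 1) * (b - M1) / s ^ 2))|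
        + |E * (2 * (n:ℝ) + 1) * ((n:ℝ) + 1) * (n:ℝ) / (4 * s ^ (n + 4))|
        + |(-(1 / (dfac * s)))| := by
        rw [hceq]
        exact (abs_add_le _ _).trans (add_le_add ((abs_add_le _ _).trans
          (add_le_add ((abs_add_le _ _).trans (le_refl _)) (le_refl _))) (le_refl _))
    _ ≤ C1 * E / s ^ (n + 4) + (2 * (n:ℝ) + 1) * C2 * E / s ^ (n + 4)
        + ((2 * (n:ℝ) + 1) * ((n:ℝ) + 1) * (n:ℝ) / 4) * E / s ^ (n + 4)
        + ((n + 3).factorial : ℝ) * E / s ^ (n + 4) := by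
        exact add_le_add (add_le_add (add_le_add e1 e2) e3) e4
    _ = (C1 + (2 * (n:ℝ) + 1) * C2 + (2 * (n:ℝ) + 1) * ((n:ℝ) + 1) * (n:ℝ) / 4
        + ((n + 3).factorial : ℝ)) * E / s ^ ((n + 2) + 2) := by
        rw [show (n + 2) + 2 = n + 4 by omega]
        ring
  have hM2' : Real.exp s / (2 * s ^ (n + 2)) * (1 - ((n + 2 : ℕ) : ℝ) * (((n + 2 : ℕ) : ℝ) - 1) / (2 * s)) = M2 := by
    rw [hM2, hEdef]; push_cast; ring
  rw [hM2']
  exact key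

lemma kEven_asymp (ℓ : ℕ) : ∃ C : ℝ, 0 < C ∧ ∀ s : ℝ, 1 ≤ s →
  |kEven ℓ s - Real.exp s / (2 * s ^ ℓ) * (1 - (ℓ : ℝ) * ((ℓ : ℝ) - 1) / (2 * s))|
    ≤ C * Real.exp s / s ^ (ℓ + 2) := by
  have key : ∀ n : ℕ, KP n ∧ KP (n + 1) := by
    intro n
    induction n with
    | zero => exact ⟨kp_zero, kp_one⟩
    | succ m ih => exact ⟨ih.2, kp_step m ih.1 ih.2⟩
  exact (key ℓ).1

lemma one_sub_pow_le' (q : ℝ) (h0 : 0 ≤ q) (h1 : q ≤ 1) (m : ℕ) :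
    1 - q ^ m ≤ (m : ℝ) * (1 - q) := by
  induction m with
  | zero => simp
  | succ k ih =>
    have hqk : q ^ k ≤ 1 := pow_le_one₀ h0 h1
    have hqk0 : 0 ≤ q ^ k := pow_nonneg h0 k
    have : q ^ (k + 1) = q * q ^ k := by ring
    push_cast
    nlinarith

lemma qfacts (q x : ℝ) (hq0 : 0 < q) (hq2 : q ^ 2 = 1 - x ^ 2) (hx0 : 0 ≤ x)
    (hxh : x ≤ 1 / 2) : q ≤ 1 ∧ 1 / 2 ≤ q ∧ 1 - q ≤ x ^ 2 := by
  have hq1 : q ≤ 1 := by nlinarith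
  have hqh : 1 / 2 ≤ q := by nlinarith
  exact ⟨hq1, hqh, by nlinarith⟩

lemma auxA (ℓ : ℕ) (q x : ℝ) (hq0 : 0 < q) (hq1 : q ≤ 1) (hqh : 1 / 2 ≤ q)
    (hq2 : q ^ 2 = 1 - x ^ 2) (h1mq : 1 - q ≤ x ^ 2) (hx0 : 0 ≤ x) :
    |(1 - q ^ 2) * (2 - q ^ (ℓ + 1) - q ^ (ℓ + 2)) / (2 * q ^ (ℓ + 1) * (1 + q))|
      ≤ 2 ^ ℓ * (2 * (ℓ:ℝ) + 3) * x ^ 4 := by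
  have hqm1 : ∀ m : ℕ, q ^ m ≤ 1 := fun m => pow_le_one₀ hq0.le hq1
  have hnum : 0 ≤ 2 - q ^ (ℓ + 1) - q ^ (ℓ + 2) := by
    have := hqm1 (ℓ + 1); have := hqm1 (ℓ + 2); linarith
  have hnum2 : 2 - q ^ (ℓ + 1) - q ^ (ℓ + 2) ≤ (2 * (ℓ:ℝ) + 3) * x ^ 2 := by
    have h1 := one_sub_pow_le' q hq0.le hq1 (ℓ + 1)
    have h2 := one_sub_pow_le' q hq0.le hq1 (ℓ + 2)
    push_cast at h1 h2
    nlinarith [sq_nonneg x]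
  have hden : (1/2:ℝ) ^ ℓ ≤ 2 * q ^ (ℓ + 1) * (1 + q) := by
    have hp : (1/2:ℝ) ^ (ℓ + 1) ≤ q ^ (ℓ + 1) := pow_le_pow_left₀ (by norm_num) hqh _
    have hh : (1/2:ℝ) ^ (ℓ + 1) = (1/2) * (1/2) ^ ℓ := by ring
    nlinarith [pow_pos (show (0:ℝ) < 1/2 by norm_num) ℓ, pow_pos hq0 (ℓ + 1)]
  have hden0 : (0:ℝ) < 2 * q ^ (ℓ + 1) * (1 + q) := by positivity
  have hx2 : (1:ℝ) - q ^ 2 = x ^ 2 := by linarith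
  have hAnn : 0 ≤ (1 - q ^ 2) * (2 - q ^ (ℓ + 1) - q ^ (ℓ + 2)) / (2 * q ^ (ℓ + 1) * (1 + q)) := by
    apply div_nonneg _ hden0.le
    apply mul_nonneg _ hnum
    nlinarith
  rw [abs_of_nonneg hAnn, hx2]
  calc x ^ 2 * (2 - q ^ (ℓ + 1) - q ^ (ℓ + 2)) / (2 * q ^ (ℓ + 1) * (1 + q))
      ≤ x ^ 2 * ((2 * (ℓ:ℝ) + 3) * x ^ 2) / ((1/2:ℝ) ^ ℓ) := by
        apply div_le_div₀ (by positivity) ?_ (by positivity) hden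
        exact mul_le_mul_of_nonneg_left hnum2 (by positivity)
    _ = 2 ^ ℓ * (2 * (ℓ:ℝ) + 3) * x ^ 4 := by
        rw [show ((1:ℝ)/2) ^ ℓ = 1 / 2 ^ ℓ by rw [div_pow]; norm_num]
        field_simp

lemma auxB (ℓ : ℕ) (hℓ : 1 ≤ ℓ) (q x t : ℝ) (hq0 : 0 < q) (hq1 : q ≤ 1) (hqh : 1 / 2 ≤ q)
    (h1mq : 1 - q ≤ x ^ 2) (hx0 : 0 ≤ x) (ht0 : 0 < t) :
    |(ℓ:ℝ) / (t * q ^ (ℓ + 2)) * (2 * q ^ (ℓ + 2) + ((ℓ:ℝ) - 1) * q - ((ℓ:ℝ) + 1))|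
      ≤ (ℓ:ℝ) * 2 ^ (ℓ + 2) * (3 * (ℓ:ℝ) + 3) * (x ^ 2 / t) := by
  have hl1 : (1:ℝ) ≤ (ℓ:ℝ) := by exact_mod_cast hℓ
  have hqm1 : q ^ (ℓ + 2) ≤ 1 := pow_le_one₀ hq0.le hq1
  have hqp : 0 < q ^ (ℓ + 2) := pow_pos hq0 _
  have hN : |2 * q ^ (ℓ + 2) + ((ℓ:ℝ) - 1) * q - ((ℓ:ℝ) + 1)| ≤ (3 * (ℓ:ℝ) + 3) * x ^ 2 := by
    have h2 := one_sub_pow_le' q hq0.le hq1 (ℓ + 2)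
    push_cast at h2
    rw [abs_le]
    constructor <;> nlinarith [sq_nonneg x]
  have hq22 : 1 / q ^ (ℓ + 2) ≤ 2 ^ (ℓ + 2) := by
    rw [div_le_iff₀ hqp]
    have hp : (1/2:ℝ) ^ (ℓ + 2) ≤ q ^ (ℓ + 2) := pow_le_pow_left₀ (by norm_num) hqh _
    have h22 : ((1:ℝ)/2) ^ (ℓ + 2) * 2 ^ (ℓ + 2) = 1 := by rw [← mul_pow]; norm_num
    nlinarith [pow_pos (show (0:ℝ) < 2 by norm_num) (ℓ + 2)]
  rw [abs_mul, abs_of_nonneg (by positivity : (0:ℝ) ≤ (ℓ:ℝ) / (t * q ^ (ℓ + 2)))]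
  calc (ℓ:ℝ) / (t * q ^ (ℓ + 2)) * |2 * q ^ (ℓ + 2) + ((ℓ:ℝ) - 1) * q - ((ℓ:ℝ) + 1)|
      ≤ (ℓ:ℝ) / (t * q ^ (ℓ + 2)) * ((3 * (ℓ:ℝ) + 3) * x ^ 2) :=
        mul_le_mul_of_nonneg_left hN (by positivity)
    _ ≤ (ℓ:ℝ) * 2 ^ (ℓ + 2) / t * ((3 * (ℓ:ℝ) + 3) * x ^ 2) := by
        apply mul_le_mul_of_nonneg_right _ (by positivity)
        rw [div_le_div_iff₀ (by positivity) ht0]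
        calc (ℓ:ℝ) * t = (ℓ:ℝ) * t * ((1 / q ^ (ℓ + 2)) * q ^ (ℓ + 2)) := by
              field_simp
          _ ≤ (ℓ:ℝ) * t * (2 ^ (ℓ + 2) * q ^ (ℓ + 2)) := by
              apply mul_le_mul_of_nonneg_left _ (by positivity)
              exact mul_le_mul_of_nonneg_right hq22 hqp.le
          _ = (ℓ:ℝ) * 2 ^ (ℓ + 2) * (t * q ^ (ℓ + 2)) := by ring
    _ = (ℓ:ℝ) * 2 ^ (ℓ + 2) * (3 * (ℓ:ℝ) + 3) * (x ^ 2 / t) := by ring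

lemma auxfinal (CA CB CE x4 x2t t2 : ℝ) (h1 : 0 ≤ CA) (h2 : 0 ≤ CB) (h3 : 0 ≤ CE)
    (h4 : 0 ≤ x4) (h5 : 0 ≤ x2t) (h6 : 0 ≤ t2) :
    CA * x4 + CB * x2t + CE * t2 ≤ (CA + CB + CE + 1) * (x4 + x2t + t2) := by nlinarith

lemma tfacts (r t : ℝ) (hr0 : 0 ≤ r) (hrt : r ≤ t / 2) (ht : 4 ≤ t) :
    0 < t ^ 2 - r ^ 2 := by nlinarith

lemma sfacts (q t : ℝ) (hqh : 1 / 2 ≤ q) (ht : 4 ≤ t) :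
    1 ≤ q * t / 2 ∧ t / 4 ≤ q * t / 2 := by constructor <;> nlinarith

/-- For `0 ≤ ψ(t) = o(t)` as `t → ∞`,
`k̃_ℓ(ψ(t),t) = (2^ℓ/t^ℓ) exp(√(t²−ψ(t)²)/2) (−2ℓ/t + (1/2)(ψ(t)/t)²
+ O((ψ(t)/t)⁴) + O(ψ(t)²/t³) + O(1/t²))` as `t → ∞`. -/
theorem stmt17 (ℓ : ℕ) (hℓ : 1 ≤ ℓ)
    (ψ : ℝ → ℝ) (hψnn : ∀ t, 0 ≤ ψ t)
    (hψ : Tendsto (fun t => ψ t / t) atTop (nhds 0)) :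
    ∃ C > (0:ℝ), ∃ T > (0:ℝ), ∀ t ≥ T,
      |kTilde ℓ (ψ t) t -
          (2 : ℝ) ^ ℓ / t ^ ℓ * Real.exp (Real.sqrt (t ^ 2 - ψ t ^ 2) / 2) *
            (-(2 * (ℓ : ℝ)) / t + (1 / 2) * (ψ t / t) ^ 2)|
        ≤ (2 : ℝ) ^ ℓ / t ^ ℓ * Real.exp (Real.sqrt (t ^ 2 - ψ t ^ 2) / 2) *
            (C * ((ψ t / t) ^ 4 + ψ t ^ 2 / t ^ 3 + 1 / t ^ 2)) := by
  obtain ⟨Ca, hCa, hka⟩ := kEven_asymp ℓ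
  obtain ⟨Cb, hCb, hkb⟩ := kEven_asymp (ℓ + 1)
  have hev : ∀ᶠ t in atTop, dist (ψ t / t) 0 < 1 / 2 :=
    Metric.tendsto_nhds.mp hψ (1 / 2) (by norm_num)
  rw [eventually_atTop] at hev
  obtain ⟨T1, hT1⟩ := hev
  set CA : ℝ := 2 ^ ℓ * (2 * (ℓ:ℝ) + 3) with hCA
  set CB : ℝ := (ℓ:ℝ) * 2 ^ (ℓ + 2) * (3 * (ℓ:ℝ) + 3) with hCB
  set CE : ℝ := 2 ^ (ℓ + 6) * Cb + 2 ^ (ℓ + 5) * Ca with hCE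
  have hCA0 : 0 < CA := by rw [hCA]; positivity
  have hCB0 : 0 ≤ CB := by rw [hCB]; positivity
  have hCE0 : 0 < CE := by rw [hCE]; positivity
  refine ⟨CA + CB + CE + 1, by linarith only [hCA0, hCB0, hCE0], max T1 4,
    lt_of_lt_of_le (by norm_num) (le_max_right _ _), fun t ht => ?_⟩
  have ht4 : (4:ℝ) ≤ t := le_trans (le_max_right _ _) ht
  have ht0 : (0:ℝ) < t := by linarith only [ht4]
  have hxlt := hT1 t (le_trans (le_max_left _ _) ht)
  rw [Real.dist_eq, sub_zero] at hxlt
  set r := ψ t with hrdef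
  have hr0 : 0 ≤ r := hψnn t
  have hx0 : 0 ≤ r / t := div_nonneg hr0 ht0.le
  have hxhalf : r / t ≤ 1 / 2 := by
    have h := le_of_lt hxlt; rwa [abs_of_nonneg hx0] at h
  have hrt : r ≤ t / 2 := by
    rw [div_le_div_iff₀ ht0 (by norm_num : (0:ℝ) < 2)] at hxhalf
    linarith only [hxhalf]
  have hsubpos : 0 < t ^ 2 - r ^ 2 := tfacts r t hr0 hrt ht4
  set s := Real.sqrt (t ^ 2 - r ^ 2) / 2 with hsdef
  have hsq : (Real.sqrt (t ^ 2 - r ^ 2)) ^ 2 = t ^ 2 - r ^ 2 := Real.sq_sqrt hsubpos.le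
  have hsqrtpos : 0 < Real.sqrt (t ^ 2 - r ^ 2) := Real.sqrt_pos.mpr hsubpos
  have hs0 : 0 < s := by rw [hsdef]; positivity
  set q := 2 * s / t with hqdef
  have hq0 : 0 < q := by positivity
  have hseq : s = q * t / 2 := by rw [hqdef]; field_simp
  have hq' : q = Real.sqrt (t ^ 2 - r ^ 2) / t := by rw [hqdef, hsdef]; ring
  have hq2 : q ^ 2 = 1 - (r / t) ^ 2 := by
    rw [hq', div_pow, hsq, div_pow]
    field_simp
  obtain ⟨hq1, hqhalf, h1mq⟩ := qfacts q (r / t) hq0 hq2 hx0 hxhalf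
  obtain ⟨hs1, hst4⟩ := sfacts q t hqhalf ht4
  rw [← hseq] at hs1 hst4
  -- exponential and prefactor
  set E := Real.exp s with hE
  have hE0 : 0 < E := Real.exp_pos s
  set P : ℝ := 2 ^ ℓ / t ^ ℓ * E with hP
  have hP0 : 0 < P := by rw [hP]; positivity
  -- main approximations
  set Ml : ℝ := E / (2 * s ^ ℓ) * (1 - (ℓ:ℝ) * ((ℓ:ℝ) - 1) / (2 * s)) with hMl
  set Ml1 : ℝ := E / (2 * s ^ (ℓ + 1)) * (1 - ((ℓ:ℝ) + 1) * (ℓ:ℝ) / (2 * s)) with hMl1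
  have hbl : |kEven ℓ s - Ml| ≤ Ca * E / s ^ (ℓ + 2) := by
    have h := hka s hs1
    rw [← hE] at h
    exact h
  have hbl1 : |kEven (ℓ + 1) s - Ml1| ≤ Cb * E / s ^ (ℓ + 3) := by
    have h := hkb s hs1
    rw [← hE] at h
    have hcast : E / (2 * s ^ (ℓ + 1)) * (1 - ((ℓ + 1 : ℕ) : ℝ) * (((ℓ + 1 : ℕ) : ℝ) - 1) / (2 * s))
        = Ml1 := by rw [hMl1]; push_cast; ring
    rw [hcast, show ℓ + 1 + 2 = ℓ + 3 by omega] at h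
    exact h
  -- the A and B correction terms
  set A : ℝ := (1 - q ^ 2) * (2 - q ^ (ℓ + 1) - q ^ (ℓ + 2)) / (2 * q ^ (ℓ + 1) * (1 + q)) with hA
  set B : ℝ := (ℓ:ℝ) / (t * q ^ (ℓ + 2)) * (2 * q ^ (ℓ + 2) + ((ℓ:ℝ) - 1) * q - ((ℓ:ℝ) + 1)) with hB
  set G : ℝ := -(2 * (ℓ:ℝ)) / t + (1 / 2) * (r / t) ^ 2 with hG
  have hΔ : t * Ml1 - 2 * Ml - P * G = P * (A + B) := by
    rw [hMl1, hMl, hP, hG, hA, hB]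
    rw [show (r / t) ^ 2 = 1 - q ^ 2 by linarith only [hq2]]
    rw [hseq]
    have h2 : (0:ℝ) < 1 + q := by linarith only [hq0]
    simp only [div_pow, mul_pow]
    field_simp
    ring
  have hsplit : kTilde ℓ r t - P * G
      = t * (kEven (ℓ + 1) s - Ml1) - 2 * (kEven ℓ s - Ml) + P * (A + B) := by
    have hkt : kTilde ℓ r t = t * kEven (ℓ + 1) s - 2 * kEven ℓ s := by
      rw [kTilde, hsdef]
    rw [hkt]
    linear_combination hΔ
  have ht40 : (0:ℝ) < t / 4 := by linarith only [ht4]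
  have herr1 : t * |kEven (ℓ + 1) s - Ml1| ≤ P * (2 ^ (ℓ + 6) * Cb / t ^ 2) := by
    have h1 : t * |kEven (ℓ + 1) s - Ml1| ≤ t * (Cb * E / (t / 4) ^ (ℓ + 3)) := by
      refine mul_le_mul_of_nonneg_left (hbl1.trans ?_) ht0.le
      apply div_le_div_of_nonneg_left (by positivity) (by positivity)
      exact pow_le_pow_left₀ ht40.le hst4 _
    refine h1.trans (le_of_eq ?_)
    rw [hP, show (4:ℝ) = 2 ^ 2 by norm_num, div_pow, ← pow_mul]
    field_simp
    ring
  have herr2 : 2 * |kEven ℓ s - Ml| ≤ P * (2 ^ (ℓ + 5) * Ca / t ^ 2) := by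
    have h1 : 2 * |kEven ℓ s - Ml| ≤ 2 * (Ca * E / (t / 4) ^ (ℓ + 2)) := by
      refine mul_le_mul_of_nonneg_left (hbl.trans ?_) (by norm_num)
      apply div_le_div_of_nonneg_left (by positivity) (by positivity)
      exact pow_le_pow_left₀ ht40.le hst4 _
    refine h1.trans (le_of_eq ?_)
    rw [hP, show (4:ℝ) = 2 ^ 2 by norm_num, div_pow, ← pow_mul]
    field_simp
    ring
  have hAbound : |A| ≤ CA * (r / t) ^ 4 := by
    rw [hA, hCA]
    exact auxA ℓ q (r / t) hq0 hq1 hqhalf hq2 h1mq hx0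
  have hBbound : |B| ≤ CB * ((r / t) ^ 2 / t) := by
    rw [hB, hCB, show (ℓ:ℝ) * 2 ^ (ℓ + 2) * (3 * (ℓ:ℝ) + 3) * ((r / t) ^ 2 / t)
      = (ℓ:ℝ) * 2 ^ (ℓ + 2) * (3 * (ℓ:ℝ) + 3) * ((r / t) ^ 2 / t) from rfl]
    exact auxB ℓ hℓ q (r / t) t hq0 hq1 hqhalf h1mq hx0 ht0
  -- put it together
  have htotal : |kTilde ℓ r t - P * G|
      ≤ P * (2 ^ (ℓ + 6) * Cb / t ^ 2) + P * (2 ^ (ℓ + 5) * Ca / t ^ 2)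
        + P * (CA * (r / t) ^ 4) + P * (CB * ((r / t) ^ 2 / t)) := by
    rw [hsplit]
    have t1 := abs_add_le (t * (kEven (ℓ + 1) s - Ml1) - 2 * (kEven ℓ s - Ml)) (P * (A + B))
    have t2 := abs_sub (t * (kEven (ℓ + 1) s - Ml1)) (2 * (kEven ℓ s - Ml))
    have t3 : |P * (A + B)| ≤ |P * A| + |P * B| := by
      rw [show P * (A + B) = P * A + P * B by ring]; exact abs_add_le _ _
    have u1 : |t * (kEven (ℓ + 1) s - Ml1)| = t * |kEven (ℓ + 1) s - Ml1| := by
      rw [abs_mul, abs_of_pos ht0]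
    have u2 : |2 * (kEven ℓ s - Ml)| = 2 * |kEven ℓ s - Ml| := by
      rw [abs_mul]; norm_num
    have u3 : |P * A| ≤ P * (CA * (r / t) ^ 4) := by
      rw [abs_mul, abs_of_pos hP0]
      exact mul_le_mul_of_nonneg_left hAbound hP0.le
    have u4 : |P * B| ≤ P * (CB * ((r / t) ^ 2 / t)) := by
      rw [abs_mul, abs_of_pos hP0]
      exact mul_le_mul_of_nonneg_left hBbound hP0.le
    rw [u1, u2] at t2
    linarith only [t1, t2, t3, u3, u4, herr1, herr2]
  -- final comparison with the stated bound
  have hgoalrw : r ^ 2 / t ^ 3 = (r / t) ^ 2 / t := by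
    rw [div_pow, div_div, ← pow_succ]
  rw [hgoalrw]
  refine htotal.trans ?_
  rw [show P * (2 ^ (ℓ + 6) * Cb / t ^ 2) + P * (2 ^ (ℓ + 5) * Ca / t ^ 2)
      + P * (CA * (r / t) ^ 4) + P * (CB * ((r / t) ^ 2 / t))
      = P * (CA * (r / t) ^ 4 + CB * ((r / t) ^ 2 / t) + CE * (1 / t ^ 2)) by
    rw [hCE]; ring]
  apply mul_le_mul_of_nonneg_left _ hP0.le
  exact auxfinal CA CB CE ((r / t) ^ 4) ((r / t) ^ 2 / t) (1 / t ^ 2)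
    hCA0.le hCB0 hCE0.le (by positivity) (by positivity) (by positivity)
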